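/- The k-step binary segmentation selection event {y : M^{BS}_{1:k}(y) = {b_{1:k}, d_{1:k}}} is an intersection of halfspaces through the origin, with the total number of defining linear inequalities equal to 2∑_{ℓ=1}^{k} (n − ℓ − 1); in particular, at step ℓ, if the intervals I₁,...,I_ℓ induced by b_{1:(ℓ-1)} partition {1,...,n}, then the new changepoint and direction are determined by exactly 2(n − ℓ − 1) inequalities of the form d_ℓ·g_{(s_{j_ℓ}, b_ℓ, e_{j_ℓ})}ᵀ y ≥ ± g_{(s_j, b, e_j)}ᵀ y. -/
import Mathlib


/-- Sum of the entries of `y` over the (1-indexed) data positions `a, ..., b`. -/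
noncomputable def segSum (n : ℕ) (y : Fin n → ℝ) (a b : ℕ) : ℝ :=
  ∑ i ∈ Finset.Icc a b, if h : i - 1 < n then y ⟨i - 1, h⟩ else 0

/-- Sample mean of `y` over the (1-indexed) data positions `a, ..., b`. -/
noncomputable def segMean (n : ℕ) (y : Fin n → ℝ) (a b : ℕ) : ℝ :=
  segSum n y a b / ((b : ℝ) - a + 1)

/-- CUSUM statistic `g_{(s,b,e)}ᵀ y`: the weighted difference between the sample mean of
`y_{(b+1):e}` and the sample mean of `y_{s:b}`. -/
noncomputable def cusum (n : ℕ) (s b e : ℕ) (y : Fin n → ℝ) : ℝ :=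
  Real.sqrt (1 / (1 / ((e : ℝ) - b) + 1 / ((b : ℝ) + 1 - s))) *
    (segMean n y (b + 1) e - segMean n y s b)

/-- The boundary set after `m` steps of binary segmentation with changepoints `b 0, ..., b (m-1)`:
the endpoints `0, n` together with the first `m` changepoints. -/
def bsBoundary (n m : ℕ) (b : ℕ → ℕ) : Set ℕ := {0, n} ∪ {x | ∃ i < m, x = b i}

/-- `(s, e)` (1-indexed start and end) is one of the intervals of the partition of `{1,...,n}`
induced by the first `m` changepoints: `s − 1` and `e` are adjacent boundary points. -/
def bsInterval (n m : ℕ) (b : ℕ → ℕ) (s e : ℕ) : Prop :=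
  1 ≤ s ∧ s ≤ e ∧ e ≤ n ∧ (s - 1) ∈ bsBoundary n m b ∧ e ∈ bsBoundary n m b ∧
    ∀ c ∈ bsBoundary n m b, ¬(s ≤ c ∧ c < e)

/-- The `k`-step binary segmentation selection event for the model `{b_{1:k}, d_{1:k}}`:
at each step `ℓ` (with `ℓ` previous changepoints), `b ℓ` lies in one of the current intervals
and its signed CUSUM statistic dominates, in absolute value, the CUSUM statistic at every
other candidate split point of every current interval. -/
def bsEvent (n k : ℕ) (b : ℕ → ℕ) (d : ℕ → ℝ) (y : Fin n → ℝ) : Prop :=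
  ∀ ℓ < k, ∃ s e, bsInterval n ℓ b s e ∧ s ≤ b ℓ ∧ b ℓ < e ∧
    ∀ s' e' b', bsInterval n ℓ b s' e' → s' ≤ b' → b' < e' → b' ≠ b ℓ →
      cusum n s' b' e' y ≤ d ℓ * cusum n s (b ℓ) e y ∧
      - cusum n s' b' e' y ≤ d ℓ * cusum n s (b ℓ) e y

/- ------------------ auxiliary lemmas ------------------ -/

lemma segSum_add (n a c : ℕ) (y z : Fin n → ℝ) :
    segSum n (y + z) a c = segSum n y a c + segSum n z a c := by
  unfold segSum
  rw [← Finset.sum_add_distrib]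
  exact Finset.sum_congr rfl fun i _ => by split <;> simp

lemma segSum_smul (n a c : ℕ) (r : ℝ) (y : Fin n → ℝ) :
    segSum n (r • y) a c = r * segSum n y a c := by
  unfold segSum
  rw [Finset.mul_sum]
  exact Finset.sum_congr rfl fun i _ => by split <;> simp

lemma cusum_add (n s b e : ℕ) (y z : Fin n → ℝ) :
    cusum n s b e (y + z) = cusum n s b e y + cusum n s b e z := by
  unfold cusum segMean; rw [segSum_add, segSum_add]; ring

lemma cusum_smul (n s b e : ℕ) (r : ℝ) (y : Fin n → ℝ) :
    cusum n s b e (r • y) = r * cusum n s b e y := by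
  unfold cusum segMean; rw [segSum_smul, segSum_smul]; ring

lemma cusum_dot (n s b e : ℕ) (y : Fin n → ℝ) :
    cusum n s b e y = ∑ j, cusum n s b e (Pi.single j 1) * y j := by
  have hy : y = ∑ j, y j • (Pi.single j (1:ℝ) : Fin n → ℝ) := by
    funext i; simp [Pi.single_apply]
  let hF : (Fin n → ℝ) →ₗ[ℝ] ℝ :=
    IsLinearMap.mk' (cusum n s b e) ⟨cusum_add n s b e, cusum_smul n s b e⟩
  have hFe : ∀ v, hF v = cusum n s b e v := fun v => rfl
  calc cusum n s b e y = hF y := (hFe y).symm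
    _ = ∑ j, cusum n s b e (Pi.single j 1) * y j := by
        conv_lhs => rw [hy]
        rw [map_sum]
        exact Finset.sum_congr rfl fun j _ => by
          rw [map_smul, smul_eq_mul, hFe, mul_comm]

lemma bsInterval_unique {n m : ℕ} {b : ℕ → ℕ} {s1 e1 s2 e2 c : ℕ}
    (h1 : bsInterval n m b s1 e1) (h2 : bsInterval n m b s2 e2)
    (hc1 : s1 ≤ c) (hc1' : c < e1) (hc2 : s2 ≤ c) (hc2' : c < e2) :
    s1 = s2 ∧ e1 = e2 := by
  obtain ⟨hs1, hse1, hen1, hbs1, hbe1, hno1⟩ := h1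
  obtain ⟨hs2, hse2, hen2, hbs2, hbe2, hno2⟩ := h2
  have he : e1 = e2 := by
    by_contra hne
    rcases Nat.lt_or_ge e1 e2 with h | h
    · exact hno2 e1 hbe1 ⟨by omega, h⟩
    · exact hno1 e2 hbe2 ⟨by omega, by omega⟩
  refine ⟨?_, he⟩
  by_contra hne
  rcases Nat.lt_or_ge s1 s2 with h | h
  · exact hno1 (s2 - 1) hbs2 ⟨by omega, by omega⟩
  · exact hno2 (s1 - 1) hbs1 ⟨by omega, by omega⟩

open Classical in
/-- The finite set of constraint triples `(s', e', b')` at step `ℓ`. -/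
noncomputable def bsT (n : ℕ) (b : ℕ → ℕ) (ℓ : ℕ) : Finset (ℕ × ℕ × ℕ) :=
  (Finset.Icc 1 n ×ˢ Finset.Icc 1 n ×ˢ Finset.Icc 1 n).filter
    (fun t => bsInterval n ℓ b t.1 t.2.1 ∧ t.1 ≤ t.2.2 ∧ t.2.2 < t.2.1 ∧ t.2.2 ≠ b ℓ)

lemma mem_bsT {n ℓ : ℕ} {b : ℕ → ℕ} {t : ℕ × ℕ × ℕ} :
    t ∈ bsT n b ℓ ↔
      bsInterval n ℓ b t.1 t.2.1 ∧ t.1 ≤ t.2.2 ∧ t.2.2 < t.2.1 ∧ t.2.2 ≠ b ℓ := by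
  classical
  constructor
  · intro ht
    exact (Finset.mem_filter.1 ht).2
  · intro ht
    refine Finset.mem_filter.2 ⟨?_, ht⟩
    obtain ⟨⟨hs1, hse, hen, _, _, _⟩, hsb, hbe, _⟩ := ht
    simp only [Finset.mem_product, Finset.mem_Icc]
    omega

lemma b_mem_range {n k : ℕ} {b : ℕ → ℕ}
    (hb : ∀ ℓ < k, ∃ s e, bsInterval n ℓ b s e ∧ s ≤ b ℓ ∧ b ℓ < e)
    {i : ℕ} (hi : i < k) : 1 ≤ b i ∧ b i ≤ n - 1 := by
  obtain ⟨s, e, ⟨hs, hse, hen, _, _, _⟩, hsb, hbe⟩ := hb i hi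
  omega

lemma b_ne_of_lt {n k : ℕ} {b : ℕ → ℕ}
    (hb : ∀ ℓ < k, ∃ s e, bsInterval n ℓ b s e ∧ s ≤ b ℓ ∧ b ℓ < e)
    {i j : ℕ} (hij : i < j) (hj : j < k) : b j ≠ b i := by
  obtain ⟨s, e, hI, hsb, hbe⟩ := hb j hj
  intro h
  exact hI.2.2.2.2.2 (b i) (Or.inr ⟨i, hij, rfl⟩) ⟨by omega, by omega⟩

lemma bsT_card {n k : ℕ} (hn : 3 ≤ n) {b : ℕ → ℕ}
    (hb : ∀ ℓ < k, ∃ s e, bsInterval n ℓ b s e ∧ s ≤ b ℓ ∧ b ℓ < e)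
    {ℓ : ℕ} (hℓ : ℓ < k) : (bsT n b ℓ).card ≤ n - (ℓ + 1) - 1 := by
  classical
  have hsub : ∀ t ∈ bsT n b ℓ,
      (fun t : ℕ × ℕ × ℕ => t.2.2) t ∈
        Finset.Icc 1 (n - 1) \ (Finset.range (ℓ + 1)).image b := by
    intro t ht
    show t.2.2 ∈ _
    rw [mem_bsT] at ht
    obtain ⟨hI, hsb, hbe, hne⟩ := ht
    obtain ⟨hs1, hse, hen, _, _, hno⟩ := hI
    rw [Finset.mem_sdiff, Finset.mem_Icc]
    refine ⟨⟨by omega, by omega⟩, ?_⟩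
    rw [Finset.mem_image]
    rintro ⟨i, hi, hbi⟩
    rw [Finset.mem_range] at hi
    rcases Nat.lt_or_ge i ℓ with h | h
    · exact hno (b i) (Or.inr ⟨i, h, rfl⟩) ⟨by omega, by omega⟩
    · have : i = ℓ := by omega
      exact hne (by rw [← hbi, this])
  have hinj : Set.InjOn (fun t : ℕ × ℕ × ℕ => t.2.2) ↑(bsT n b ℓ) := by
    intro t1 h1 t2 h2 h
    rw [Finset.mem_coe, mem_bsT] at h1 h2
    simp only at h
    obtain ⟨u1, u2⟩ := bsInterval_unique h1.1 h2.1 h1.2.1 h1.2.2.1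
      (by rw [h]; exact h2.2.1) (by rw [h]; exact h2.2.2.1)
    exact Prod.ext u1 (Prod.ext u2 h)
  have hle := Finset.card_le_card_of_injOn _ hsub hinj
  have himg : (Finset.range (ℓ + 1)).image b ⊆ Finset.Icc 1 (n - 1) := by
    intro x hx
    rw [Finset.mem_image] at hx
    obtain ⟨i, hi, rfl⟩ := hx
    rw [Finset.mem_range] at hi
    have := b_mem_range hb (show i < k by omega)
    rw [Finset.mem_Icc]; omega
  have hcard : ((Finset.range (ℓ + 1)).image b).card = ℓ + 1 := by
    rw [Finset.card_image_of_injOn, Finset.card_range]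
    intro i hi j hj hij
    rw [Finset.mem_coe, Finset.mem_range] at hi hj
    by_contra hne
    rcases Nat.lt_or_ge i j with h | h
    · exact b_ne_of_lt hb h (by omega) hij.symm
    · exact b_ne_of_lt hb (show j < i by omega) (by omega) hij
  rw [Finset.card_sdiff_of_subset himg, hcard, Nat.card_Icc] at hle
  omega

/-- The `k`-step binary segmentation selection event is an intersection of
halfspaces through the origin, i.e. equals `{y : Γy ≥ 0}` for a matrix `Γ` with exactly
`2 ∑_{ℓ=1}^{k} (n − ℓ − 1)` rows: at step `ℓ` the new changepoint and direction are
determined by exactly `2(n − ℓ − 1)` linear inequalities. -/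
theorem k_step_bs_polyhedral (n k : ℕ) (hn : 3 ≤ n)
    (b : ℕ → ℕ) (d : ℕ → ℝ) (hd : ∀ ℓ < k, d ℓ = 1 ∨ d ℓ = -1)
    (hb : ∀ ℓ < k, ∃ s e, bsInterval n ℓ b s e ∧ s ≤ b ℓ ∧ b ℓ < e) :
    ∃ Γ : Matrix (Fin (2 * ∑ ℓ ∈ Finset.range k, (n - (ℓ + 1) - 1))) (Fin n) ℝ,
      ∀ y : Fin n → ℝ, bsEvent n k b d y ↔ ∀ i, 0 ≤ Γ.mulVec y i := by
  classical
  have hb0 := hb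
  choose S E hIse hsb hbe using hb0
  set N := 2 * ∑ ℓ ∈ Finset.range k, (n - (ℓ + 1) - 1) with hN
  -- the index set of constraints
  let A : Finset ((_ : ℕ) × ((ℕ × ℕ × ℕ) × Bool)) :=
    (Finset.range k).sigma (fun ℓ => (bsT n b ℓ) ×ˢ (Finset.univ : Finset Bool))
  -- the constraint functional
  let F : ((_ : ℕ) × ((ℕ × ℕ × ℕ) × Bool)) → (Fin n → ℝ) → ℝ := fun a y =>
    if h : a.1 < k then
      d a.1 * cusum n (S a.1 h) (b a.1) (E a.1 h) y +
        (if a.2.2 then -1 else 1) * cusum n a.2.1.1 a.2.1.2.2 a.2.1.2.1 y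
    else 0
  have hFdef : F = fun a y =>
      if h : a.1 < k then
        d a.1 * cusum n (S a.1 h) (b a.1) (E a.1 h) y +
          (if a.2.2 then -1 else 1) * cusum n a.2.1.1 a.2.1.2.2 a.2.1.2.1 y
      else 0 := rfl
  have Fdot : ∀ a y, F a y = ∑ j, F a (Pi.single j 1) * y j := by
    intro a y
    rw [hFdef]
    by_cases h : a.1 < k
    · simp only [dif_pos h]
      rw [cusum_dot n (S a.1 h) (b a.1) (E a.1 h) y,
        cusum_dot n a.2.1.1 a.2.1.2.2 a.2.1.2.1 y,
        Finset.mul_sum, Finset.mul_sum, ← Finset.sum_add_distrib]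
      exact Finset.sum_congr rfl fun j _ => by ring
    · simp [dif_neg h]
  -- cardinality bound
  have hAcard : A.card ≤ N := by
    have h1 : A.card = ∑ ℓ ∈ Finset.range k, (bsT n b ℓ).card * 2 := by
      rw [Finset.card_sigma]
      exact Finset.sum_congr rfl fun ℓ _ => by
        rw [Finset.card_product, Finset.card_univ, Fintype.card_bool]
    rw [h1, hN]
    calc ∑ ℓ ∈ Finset.range k, (bsT n b ℓ).card * 2
        ≤ ∑ ℓ ∈ Finset.range k, (n - (ℓ + 1) - 1) * 2 :=
          Finset.sum_le_sum fun ℓ hℓ =>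
            Nat.mul_le_mul_right 2 (bsT_card hn hb (Finset.mem_range.1 hℓ))
      _ = 2 * ∑ ℓ ∈ Finset.range k, (n - (ℓ + 1) - 1) := by
          rw [← Finset.sum_mul, mul_comm]
  have hcard2 : Fintype.card ↥A ≤ N := by rw [Fintype.card_coe]; exact hAcard
  -- embedding of constraints into rows
  let emb : ↥A → Fin N := fun a => Fin.castLE hcard2 ((Fintype.equivFin ↥A) a)
  have hemb : Function.Injective emb := fun a1 a2 h =>
    (Fintype.equivFin ↥A).injective (Fin.castLE_injective _ h)
  -- the matrix
  let Γ : Matrix (Fin N) (Fin n) ℝ := fun i j =>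
    if h : ∃ a : ↥A, emb a = i then F h.choose.1 (Pi.single j 1) else 0
  have hΓdef : Γ = fun i j =>
      if h : ∃ a : ↥A, emb a = i then F h.choose.1 (Pi.single j 1) else 0 := rfl
  refine ⟨Γ, ?_⟩
  have key : ∀ (y : Fin n → ℝ) i, Γ.mulVec y i =
      if h : ∃ a : ↥A, emb a = i then F h.choose.1 y else 0 := by
    intro y i
    have hmv : Γ.mulVec y i = ∑ j, Γ i j * y j := rfl
    rw [hmv, hΓdef]
    by_cases h : ∃ a : ↥A, emb a = i
    · simp only [dif_pos h]
      exact (Fdot _ y).symm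
    · simp only [dif_neg h]
      simp
  intro y
  constructor
  · -- event → inequalities
    intro hEv i
    rw [key y i]
    by_cases h : ∃ a : ↥A, emb a = i
    · rw [dif_pos h]
      obtain ⟨a, ha⟩ := h.choose
      have haA : a ∈ A := ha
      rw [Finset.mem_sigma] at haA
      obtain ⟨hℓr, hpair⟩ := haA
      rw [Finset.mem_range] at hℓr
      rw [Finset.mem_product] at hpair
      have ht := mem_bsT.1 hpair.1
      obtain ⟨hI, hsb', hbe', hne'⟩ := ht
      obtain ⟨s, e, hIe, hsbe, hbee, hineq⟩ := hEv a.1 hℓr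
      obtain ⟨hseq, heeq⟩ := bsInterval_unique hIe (hIse a.1 hℓr) hsbe hbee
        (hsb a.1 hℓr) (hbe a.1 hℓr)
      have hmain := hineq a.2.1.1 a.2.1.2.1 a.2.1.2.2 hI hsb' hbe' hne'
      rw [hseq, heeq] at hmain
      rw [hFdef]
      simp only [dif_pos hℓr]
      rcases Bool.eq_false_or_eq_true a.2.2 with hB | hB <;>
        simp only [hB] <;> norm_num <;> linarith [hmain.1, hmain.2]
    · rw [dif_neg h]
  · -- inequalities → event
    intro hIneq
    have hcons : ∀ a (ha : a ∈ A), 0 ≤ F a y := by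
      intro a ha
      have h0 := hIneq (emb ⟨a, ha⟩)
      rw [key] at h0
      have hex : ∃ a' : ↥A, emb a' = emb ⟨a, ha⟩ := ⟨⟨a, ha⟩, rfl⟩
      rw [dif_pos hex] at h0
      have heq : hex.choose = ⟨a, ha⟩ := hemb hex.choose_spec
      rw [heq] at h0
      exact h0
    intro ℓ hℓ
    refine ⟨S ℓ hℓ, E ℓ hℓ, hIse ℓ hℓ, hsb ℓ hℓ, hbe ℓ hℓ, ?_⟩
    intro s' e' b' hI' hs' hb' hne
    have hT : ((s', e', b') : ℕ × ℕ × ℕ) ∈ bsT n b ℓ :=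
      mem_bsT.2 ⟨hI', hs', hb', hne⟩
    have hmemT : (⟨ℓ, ((s', e', b'), true)⟩ : (_ : ℕ) × ((ℕ × ℕ × ℕ) × Bool)) ∈ A := by
      rw [Finset.mem_sigma, Finset.mem_range, Finset.mem_product]
      exact ⟨hℓ, hT, Finset.mem_univ _⟩
    have hmemF : (⟨ℓ, ((s', e', b'), false)⟩ : (_ : ℕ) × ((ℕ × ℕ × ℕ) × Bool)) ∈ A := by
      rw [Finset.mem_sigma, Finset.mem_range, Finset.mem_product]
      exact ⟨hℓ, hT, Finset.mem_univ _⟩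
    have h1 := hcons _ hmemT
    have h2 := hcons _ hmemF
    rw [hFdef] at h1 h2
    simp only [dif_pos hℓ] at h1 h2
    norm_num at h1 h2
    constructor <;> linarith
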